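/- Let F be an even polynomial of degree 2n with F'(0) = 0 and F^{(3)}(0) = 0, and let a > 0. Then Σ_{p=1}^{2n−1} ((−1)^p/(p−1)!) F^{(p+1)}(a) a^{p−1} = −F''(0), and Σ_{p=2}^{2n−1} ((−1)^p/(p−2)!) F^{(p+1)}(a) a^{p−1} = a·F^{(3)}(0) = 0. -/

import Mathlib

open Polynomial

lemma eval_deriv_hasse (G : Polynomial ℝ) (j : ℕ) (a : ℝ) :
    ((Polynomial.hasseDeriv j G).eval a) =
      (Polynomial.derivative^[j] G).eval a / (Nat.factorial j : ℝ) := by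
  have h := congrFun (Polynomial.factorial_smul_hasseDeriv (R := ℝ) (k := j)) G
  have h2 : (Nat.factorial j) • Polynomial.hasseDeriv j G = Polynomial.derivative^[j] G := h
  have := congrArg (Polynomial.eval a) h2
  simp only [Polynomial.eval_smul, nsmul_eq_mul, Polynomial.eval_mul, Polynomial.eval_natCast] at this
  field_simp [Nat.factorial_ne_zero]
  linarith [this]

lemma taylor_eval_zero (G : Polynomial ℝ) (a : ℝ) (d : ℕ) (hd : G.natDegree ≤ d) :
    G.eval 0 = ∑ j ∈ Finset.range (d + 1),
      (Polynomial.derivative^[j] G).eval a * (-a) ^ j / (Nat.factorial j : ℝ) := by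
  have h0 : G.eval 0 = (Polynomial.taylor a G).eval (-a) := by
    rw [Polynomial.taylor_eval]; ring_nf
  rw [h0, Polynomial.eval_eq_sum_range' (n := d + 1)
    (lt_of_le_of_lt (by rw [Polynomial.natDegree_taylor]; exact hd) (Nat.lt_succ_self _))]
  refine Finset.sum_congr rfl fun j _ => ?_
  rw [Polynomial.taylor_coeff, eval_deriv_hasse]
  ring

theorem even_poly_derivative_sums (n : ℕ) (hn : 1 ≤ n) (F : Polynomial ℝ)
    (hdeg : F.natDegree = 2 * n)
    (heven : ∀ x : ℝ, F.eval (-x) = F.eval x)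
    (hF1 : (derivative F).eval 0 = 0)
    (hF3 : (derivative^[3] F).eval 0 = 0)
    (a : ℝ) (ha : 0 < a) :
    (∑ p ∈ Finset.Icc 1 (2 * n - 1),
        ((-1 : ℝ) ^ p / (Nat.factorial (p - 1) : ℝ)) *
          (derivative^[p + 1] F).eval a * a ^ (p - 1))
      = -((derivative^[2] F).eval 0) ∧
    (∑ p ∈ Finset.Icc 2 (2 * n - 1),
        ((-1 : ℝ) ^ p / (Nat.factorial (p - 2) : ℝ)) *
          (derivative^[p + 1] F).eval a * a ^ (p - 1))
      = a * (derivative^[3] F).eval 0 := by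
  constructor
  · -- first sum
    have hIcc : Finset.Icc 1 (2 * n - 1) = Finset.Ico 1 (2 * n) := by
      have h' : 2 * n = (2 * n - 1) + 1 := by omega
      rw [h', Finset.Ico_add_one_right_eq_Icc]
      simp
    rw [hIcc, Finset.sum_Ico_eq_sum_range]
    have hdeg2 : (Polynomial.derivative^[2] F).natDegree ≤ 2 * n - 2 := by
      have := Polynomial.natDegree_iterate_derivative F 2
      omega
    have hT := taylor_eval_zero (Polynomial.derivative^[2] F) a (2 * n - 2) hdeg2
    have hrange : 2 * n - 2 + 1 = 2 * n - 1 := by omega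
    rw [hrange] at hT
    rw [hT, ← Finset.sum_neg_distrib]
    refine Finset.sum_congr rfl fun i _ => ?_
    have hiter : Polynomial.derivative^[1 + i + 1] F
        = Polynomial.derivative^[i] (Polynomial.derivative^[2] F) := by
      rw [← Function.iterate_add_apply]
      congr 1
      omega
    rw [hiter]
    have e1 : 1 + i - 1 = i := by omega
    rw [e1, show ((-a : ℝ)) ^ i = (-1 : ℝ) ^ i * a ^ i from by rw [neg_pow],
      show ((-1 : ℝ)) ^ (1 + i) = (-1 : ℝ) * (-1 : ℝ) ^ i from by ring]
    ring
  · -- second sum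
    rw [hF3, mul_zero]
    rcases Nat.lt_or_ge n 2 with h2 | h2
    · have : n = 1 := by omega
      subst this
      norm_num
    · have hIcc : Finset.Icc 2 (2 * n - 1) = Finset.Ico 2 (2 * n) := by
        have h' : 2 * n = (2 * n - 1) + 1 := by omega
        rw [h', Finset.Ico_add_one_right_eq_Icc]
        simp
      rw [hIcc, Finset.sum_Ico_eq_sum_range]
      have hdeg3 : (Polynomial.derivative^[3] F).natDegree ≤ 2 * n - 3 := by
        have := Polynomial.natDegree_iterate_derivative F 3
        omega
      have hT := taylor_eval_zero (Polynomial.derivative^[3] F) a (2 * n - 3) hdeg3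
      rw [hF3] at hT
      have hrange : 2 * n - 3 + 1 = 2 * n - 2 := by omega
      rw [hrange] at hT
      have : (∑ i ∈ Finset.range (2 * n - 2),
          ((-1 : ℝ) ^ (2 + i) / (Nat.factorial (2 + i - 2) : ℝ)) *
            (Polynomial.derivative^[2 + i + 1] F).eval a * a ^ (2 + i - 1))
          = a * ∑ j ∈ Finset.range (2 * n - 2),
              (Polynomial.derivative^[j] (Polynomial.derivative^[3] F)).eval a
                * (-a) ^ j / (Nat.factorial j : ℝ) := by
        rw [Finset.mul_sum]
        refine Finset.sum_congr rfl fun i _ => ?_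
        have hiter : Polynomial.derivative^[2 + i + 1] F
            = Polynomial.derivative^[i] (Polynomial.derivative^[3] F) := by
          rw [← Function.iterate_add_apply]
          congr 1
          omega
        rw [hiter]
        have h1 : 2 + i - 2 = i := by omega
        have h2' : 2 + i - 1 = i + 1 := by omega
        rw [h1, h2', show ((-a : ℝ)) ^ i = (-1 : ℝ) ^ i * a ^ i from by rw [neg_pow],
          show ((-1 : ℝ)) ^ (2 + i) = (-1 : ℝ) ^ i from by ring]
        ring
      rw [this, ← hT, mul_zero]
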